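/- Let F, C be disjoint finite sets with a metric d on F ∪ C, let T > 0 and k ∈ ℕ, let (x, y) be a feasible solution to SC-LP(T, k), let ε ∈ (0, 1), and set ρ := (1 + ε)/ε and D(j) := ∑_{i ∈ F} d(i,j)·x_{ij}. Then there exist x̂ : F × C → [0, 1] and ŷ : F → [0, 1] such that: ∑_{i ∈ F} ŷ_i ≤ (1 + ε)·k; x̂_{ij} ≤ ŷ_i for all i, j; ∑_{i ∈ F} x̂_{ij} = 1 for every j ∈ C; if x̂_{ij} > 0 then x_{ij} > 0 and d(i, j) ≤ ρ·D(j); and L(i, x̂) ≤ (1 + ε)·T·ŷ_i for every i ∈ F. -/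

import Mathlib

/-- Feasibility for the LP relaxation `SC-LP(T, k)` of the star cover problem. -/
def SCLPFeasible {X : Type*} [MetricSpace X] (F C : Finset X) (T : ℝ) (k : ℕ)
    (x : X → X → ℝ) (y : X → ℝ) : Prop :=
  (∀ i ∈ F, ∀ j ∈ C, x i j ∈ Set.Icc (0 : ℝ) 1) ∧
  (∀ i ∈ F, y i ∈ Set.Icc (0 : ℝ) 1) ∧
  (∀ i ∈ F, ∑ j ∈ C, dist i j * x i j ≤ T * y i) ∧
  (∑ i ∈ F, y i ≤ (k : ℝ)) ∧
  (∀ j ∈ C, ∑ i ∈ F, x i j = 1) ∧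
  (∀ i ∈ F, ∀ j ∈ C, x i j ≤ y i) ∧
  (∀ i ∈ F, ∀ j ∈ C, T < dist i j → x i j = 0)

/-- The Lin–Vitter filtering step: from a feasible solution of SC-LP(T, k) one
obtains `(x̂, ŷ)` with total opening at most `(1+ε)k`, full demands, loads at
most `(1+ε)·T·ŷ_i`, and every nonzero assignment within distance `ρ·D(j)` of
its client, where `ρ = (1+ε)/ε` and `D(j) = ∑_{i ∈ F} d(i,j)·x_{ij}`. -/
theorem lin_vitter_filtering {X : Type*} [MetricSpace X]
    (F C : Finset X) (hFC : Disjoint F C) (T : ℝ) (hT : 0 < T) (k : ℕ)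
    (x : X → X → ℝ) (y : X → ℝ) (hfeas : SCLPFeasible F C T k x y)
    (ε : ℝ) (hε0 : 0 < ε) (hε1 : ε < 1)
    (ρ : ℝ) (hρ : ρ = (1 + ε) / ε) :
    ∃ (xh : X → X → ℝ) (yh : X → ℝ),
      (∀ i ∈ F, ∀ j ∈ C, xh i j ∈ Set.Icc (0 : ℝ) 1) ∧
      (∀ i ∈ F, yh i ∈ Set.Icc (0 : ℝ) 1) ∧
      (∑ i ∈ F, yh i ≤ (1 + ε) * k) ∧
      (∀ i ∈ F, ∀ j ∈ C, xh i j ≤ yh i) ∧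
      (∀ j ∈ C, ∑ i ∈ F, xh i j = 1) ∧
      (∀ i ∈ F, ∀ j ∈ C, 0 < xh i j →
        0 < x i j ∧ dist i j ≤ ρ * ∑ u ∈ F, dist u j * x u j) ∧
      (∀ i ∈ F, ∑ j ∈ C, dist i j * xh i j ≤ (1 + ε) * T * yh i) := by
  obtain ⟨hx01, hy01, hload, hk, hdem, hxy, hfar⟩ := hfeas
  have hε1' : (0:ℝ) < 1 + ε := by linarith
  have hρ0 : 0 < ρ := by rw [hρ]; positivity
  set D : X → ℝ := fun j => ∑ u ∈ F, dist u j * x u j with hD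
  set M : X → ℝ := fun j => ∑ u ∈ F, if dist u j ≤ ρ * D j then x u j else 0 with hM
  -- positivity of D on C
  have hDpos : ∀ j ∈ C, 0 < D j := by
    intro j hj
    have hnn : ∀ u ∈ F, 0 ≤ dist u j * x u j := fun u hu =>
      mul_nonneg dist_nonneg (hx01 u hu j hj).1
    rcases (Finset.sum_nonneg hnn).lt_or_eq with h | h
    · exact h
    · exfalso
      have hz : ∀ u ∈ F, dist u j * x u j = 0 := by
        intro u hu
        exact (Finset.sum_eq_zero_iff_of_nonneg hnn).mp h.symm u hu
      have : ∑ u ∈ F, x u j = 0 := by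
        apply Finset.sum_eq_zero
        intro u hu
        have hne : u ≠ j := fun he => (Finset.disjoint_left.mp hFC hu) (he ▸ hj)
        have hd : 0 < dist u j := dist_pos.mpr hne
        have := hz u hu
        rcases mul_eq_zero.mp this with h' | h'
        · exact absurd h' hd.ne'
        · exact h'
      rw [hdem j hj] at this; norm_num at this
  -- Markov: M j ≥ 1/(1+ε)
  have hMlb : ∀ j ∈ C, 1 / (1 + ε) ≤ M j := by
    intro j hj
    have hsplit : M j + ∑ u ∈ F, (if dist u j ≤ ρ * D j then 0 else x u j) = 1 := by
      rw [hM]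
      rw [← Finset.sum_add_distrib, ← hdem j hj]
      apply Finset.sum_congr rfl
      intro u hu
      by_cases h : dist u j ≤ ρ * D j <;> simp [h]
    have hfarle : ∑ u ∈ F, (if dist u j ≤ ρ * D j then 0 else x u j)
        ≤ ∑ u ∈ F, dist u j * x u j / (ρ * D j) := by
      apply Finset.sum_le_sum
      intro u hu
      by_cases h : dist u j ≤ ρ * D j
      · simp only [h, if_true]
        exact div_nonneg (mul_nonneg dist_nonneg (hx01 u hu j hj).1)
          (mul_pos hρ0 (hDpos j hj)).le
      · simp only [h, if_false]
        push_neg at h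
        have hden : 0 < ρ * D j := mul_pos hρ0 (hDpos j hj)
        rw [le_div_iff₀ hden]
        calc x u j * (ρ * D j) ≤ x u j * dist u j :=
              mul_le_mul_of_nonneg_left h.le (hx01 u hu j hj).1
          _ = dist u j * x u j := mul_comm _ _
    have hsum : ∑ u ∈ F, dist u j * x u j / (ρ * D j) = 1 / ρ := by
      rw [← Finset.sum_div]
      rw [show ∑ u ∈ F, dist u j * x u j = D j from rfl]
      rw [mul_comm, ← div_div, div_self (hDpos j hj).ne']
    have h1ρ : 1 / ρ = ε / (1 + ε) := by
      rw [hρ]; field_simp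
    have h1 : 1 - ε / (1 + ε) ≤ M j := by
      have := hfarle.trans_eq (hsum.trans h1ρ)
      linarith
    have h2 : 1 - ε / (1 + ε) = 1 / (1 + ε) := by field_simp; ring
    linarith
  have hMpos : ∀ j ∈ C, 0 < M j := fun j hj =>
    lt_of_lt_of_le (by positivity) (hMlb j hj)
  have hMinv : ∀ j ∈ C, 1 / M j ≤ 1 + ε := by
    intro j hj
    rw [div_le_iff₀ (hMpos j hj)]
    have := hMlb j hj
    rw [div_le_iff₀ hε1'] at this
    linarith
  refine ⟨fun i j => if dist i j ≤ ρ * D j then x i j / M j else 0,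
    fun i => min 1 ((1 + ε) * y i), ?_, ?_, ?_, ?_, ?_, ?_, ?_⟩
  · -- xh ∈ [0,1]
    intro i hi j hj
    by_cases h : dist i j ≤ ρ * D j
    · simp only [h, if_true]
      constructor
      · exact div_nonneg (hx01 i hi j hj).1 (hMpos j hj).le
      · rw [div_le_one (hMpos j hj)]
        rw [hM]
        have := Finset.single_le_sum (f := fun u => if dist u j ≤ ρ * D j then x u j else 0)
          (fun u hu => by by_cases h' : dist u j ≤ ρ * D j <;>
            simp [h', (hx01 u hu j hj).1]) hi
        simpa [h] using this
    · simp [h]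
  · -- yh ∈ [0,1]
    intro i hi
    exact ⟨le_min (by norm_num) (mul_nonneg hε1'.le (hy01 i hi).1), min_le_left _ _⟩
  · -- total opening
    calc ∑ i ∈ F, min 1 ((1 + ε) * y i) ≤ ∑ i ∈ F, (1 + ε) * y i :=
        Finset.sum_le_sum fun i _ => min_le_right _ _
      _ = (1 + ε) * ∑ i ∈ F, y i := by rw [Finset.mul_sum]
      _ ≤ (1 + ε) * k := by
          exact mul_le_mul_of_nonneg_left hk hε1'.le
  · -- xh ≤ yh
    intro i hi j hj
    by_cases h : dist i j ≤ ρ * D j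
    · simp only [h, if_true]
      apply le_min
      · rw [div_le_one (hMpos j hj)]
        rw [hM]
        have := Finset.single_le_sum (f := fun u => if dist u j ≤ ρ * D j then x u j else 0)
          (fun u hu => by by_cases h' : dist u j ≤ ρ * D j <;>
            simp [h', (hx01 u hu j hj).1]) hi
        simpa [hM, h] using this
      · calc x i j / M j = x i j * (1 / M j) := by ring
          _ ≤ x i j * (1 + ε) := mul_le_mul_of_nonneg_left (hMinv j hj) (hx01 i hi j hj).1
          _ ≤ y i * (1 + ε) := mul_le_mul_of_nonneg_right (hxy i hi j hj) hε1'.le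
          _ = (1 + ε) * y i := mul_comm _ _
    · simp only [h, if_false]
      exact le_min (by norm_num) (mul_nonneg hε1'.le (hy01 i hi).1)
  · -- demands
    intro j hj
    have : ∑ i ∈ F, (if dist i j ≤ ρ * D j then x i j / M j else 0)
        = (∑ i ∈ F, if dist i j ≤ ρ * D j then x i j else 0) / M j := by
      rw [Finset.sum_div]
      apply Finset.sum_congr rfl
      intro u hu
      by_cases h : dist u j ≤ ρ * D j <;> simp [h]
    rw [this]
    exact div_self (hMpos j hj).ne'
  · -- support
    intro i hi j hj hpos
    by_cases h : dist i j ≤ ρ * D j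
    · simp only [h, if_true] at hpos
      refine ⟨?_, h⟩
      by_contra hc
      push_neg at hc
      have : x i j = 0 := le_antisymm hc (hx01 i hi j hj).1
      rw [this] at hpos; simp at hpos
    · simp [h] at hpos
  · -- loads
    intro i hi
    show ∑ j ∈ C, dist i j * (if dist i j ≤ ρ * D j then x i j / M j else 0)
        ≤ (1 + ε) * T * min 1 ((1 + ε) * y i)
    have hstep : ∑ j ∈ C, dist i j * (if dist i j ≤ ρ * D j then x i j / M j else 0)
        ≤ (1 + ε) * ∑ j ∈ C, dist i j * x i j := by
      rw [Finset.mul_sum]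
      apply Finset.sum_le_sum
      intro j hj
      by_cases h : dist i j ≤ ρ * D j
      · simp only [h, if_true]
        calc dist i j * (x i j / M j) = dist i j * x i j * (1 / M j) := by ring
          _ ≤ dist i j * x i j * (1 + ε) := by
              apply mul_le_mul_of_nonneg_left (hMinv j hj)
              exact mul_nonneg dist_nonneg (hx01 i hi j hj).1
          _ = (1 + ε) * (dist i j * x i j) := mul_comm _ _
      · simp only [h, if_false, mul_zero]
        exact mul_nonneg hε1'.le (mul_nonneg dist_nonneg (hx01 i hi j hj).1)
    have hL : ∑ j ∈ C, dist i j * (if dist i j ≤ ρ * D j then x i j / M j else 0)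
        ≤ (1 + ε) * (T * y i) :=
      hstep.trans (mul_le_mul_of_nonneg_left (hload i hi) hε1'.le)
    rcases le_total ((1 + ε) * y i) 1 with hm | hm
    · have : min 1 ((1 + ε) * y i) = (1 + ε) * y i := min_eq_right hm
      rw [this]
      have hynn := (hy01 i hi).1
      nlinarith [hL, mul_nonneg hT.le hynn, hε0, hε1',
        mul_nonneg (mul_nonneg hε0.le hT.le) hynn,
        mul_nonneg (mul_nonneg (mul_nonneg hε0.le hε1'.le) hT.le) hynn]
    · have : min 1 ((1 + ε) * y i) = 1 := min_eq_left hm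
      rw [this]
      have hy1 := (hy01 i hi).2
      nlinarith [hL, mul_nonneg hε1'.le hT.le,
        mul_le_mul_of_nonneg_left (mul_le_of_le_one_right hT.le hy1) hε1'.le]
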